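/- If L1 and L2 are ladder graphs with n1 and n2 vertices respectively, n1 > n2 > 1, then 3^{n1-n2}·τ(L2) ≥ τ(L1) ≥ 2^{n1-n2}·τ(L2), where τ denotes the number of spanning trees. -/

import Mathlib

open SimpleGraph

/-- The triangular-lattice ladder on `n` vertices: listing the vertices of the two
parallel rails in zigzag order `0, 1, …, n-1`, two vertices are adjacent exactly when
they are at distance 1 or 2 in this order. -/
def ladder (n : ℕ) : SimpleGraph (Fin n) :=
  SimpleGraph.fromRel (fun i j => (j : ℕ) = (i : ℕ) + 1 ∨ (j : ℕ) = (i : ℕ) + 2)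

/-- The number of spanning trees of `G`. -/
noncomputable def numSpanningTrees {V : Type*} [Fintype V] (G : SimpleGraph V) : ℕ :=
  Set.ncard {T : SimpleGraph V | T ≤ G ∧ T.IsTree}

namespace LadderAux

open SimpleGraph Walk

variable {V W : Type*}

/-- Reachability transfers along a map that sends edges to edges or collapses them. -/
lemma reachable_of_pseudoHom {G : SimpleGraph V} {H : SimpleGraph W} (r : V → W)
    (hr : ∀ ⦃u v⦄, G.Adj u v → H.Adj (r u) (r v) ∨ r u = r v) {u v : V}
    (h : G.Reachable u v) : H.Reachable (r u) (r v) := by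
  obtain ⟨p⟩ := h
  induction p with
  | nil => exact Reachable.refl _
  | cons h' p ih =>
    rcases hr h' with h2 | h2
    · exact (h2.reachable).trans ih
    · rw [h2]; exact ih

/-- Walks whose support lies in the range of an adjacency-reflecting embedding pull back. -/
lemma exists_walk_pullback {G : SimpleGraph V} {H : SimpleGraph W} (f : V ↪ W)
    (hrefl : ∀ ⦃u v : V⦄, H.Adj (f u) (f v) → G.Adj u v) :
    ∀ {x y : W} (p : H.Walk x y), (∀ w ∈ p.support, w ∈ Set.range f) →
      ∀ {u v : V}, f u = x → f v = y →
      ∃ q : G.Walk u v, q.support.map f = p.support ∧ q.edges.map (Sym2.map f) = p.edges := by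
  intro x y p
  induction p with
  | nil =>
    intro _ u v hx hy
    obtain rfl : u = v := f.injective (hx.trans hy.symm)
    exact ⟨Walk.nil, by simp [hx], by simp⟩
  | @cons x z y h p ih =>
    intro hsup u v hx hy
    obtain ⟨w, hw⟩ : z ∈ Set.range f := hsup z (by simp)
    obtain ⟨q, hq1, hq2⟩ := ih (fun t ht => hsup t (by simp [ht])) (u := w) (v := v) hw hy
    have hadj : G.Adj u w := hrefl (by rw [hx, hw]; exact h)
    refine ⟨Walk.cons hadj q, by simp [hq1, hx], ?_⟩
    simp [hq2, hx, hw]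

/-- Cycles whose support lies in the range of an adjacency-reflecting embedding pull back. -/
lemma isCycle_pullback {G : SimpleGraph V} {H : SimpleGraph W} (f : V ↪ W)
    (hrefl : ∀ ⦃u v : V⦄, H.Adj (f u) (f v) → G.Adj u v) {u : V} {x : W}
    (c : H.Walk x x) (hc : c.IsCycle) (hsup : ∀ w ∈ c.support, w ∈ Set.range f)
    (hx : f u = x) : ∃ q : G.Walk u u, q.IsCycle := by
  obtain ⟨q, hq1, hq2⟩ := exists_walk_pullback f hrefl c hsup hx hx
  refine ⟨q, ⟨⟨?_⟩, ?_⟩, ?_⟩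
  · exact List.Nodup.of_map _ (hq2 ▸ hc.isCircuit.isTrail.edges_nodup)
  · intro hnil
    have h3 := hc.three_le_length
    have hlen : q.edges.length = c.edges.length := by rw [← hq2, List.length_map]
    rw [Walk.length_edges, Walk.length_edges] at hlen
    rw [hnil] at hlen
    simp at hlen
    omega
  · have := hc.support_nodup
    rw [← hq1] at this
    rw [← List.map_tail] at this
    exact List.Nodup.of_map _ this

/-- A cycle cannot pass through a vertex all of whose edges go to a single vertex. -/
lemma not_isCycle_through_pendant {G : SimpleGraph V} {ℓ t : V}
    (hdeg : ∀ x, G.Adj ℓ x → x = t) {v : V} (cyc : G.Walk v v) (hcyc : cyc.IsCycle)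
    (hl : ℓ ∈ cyc.support) : False := by
  classical
  have hc : (cyc.rotate ℓ hl).IsCycle := hcyc.rotate hl
  generalize hgen : cyc.rotate ℓ hl = c at hc
  clear hgen hl hcyc
  cases c with
  | nil => exact hc.ne_nil rfl
  | cons hadj p =>
    rename_i w
    have hw : w = t := hdeg _ hadj
    subst hw
    obtain ⟨x, hadj2, q, hq⟩ := Walk.exists_eq_cons_of_ne (hadj.ne) p.reverse
    have hx : x = w := hdeg _ hadj2
    subst hx
    have hmem : s(ℓ, x) ∈ p.edges := by
      have h1 : s(ℓ, x) ∈ p.reverse.edges := by rw [hq]; simp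
      rwa [Walk.edges_reverse, List.mem_reverse] at h1
    have hnd := hc.isCircuit.isTrail.edges_nodup
    rw [Walk.edges_cons] at hnd
    exact (List.nodup_cons.mp hnd).1 hmem

/-- Joining two components of an acyclic graph by an edge keeps it acyclic. -/
lemma isAcyclic_sup_edge {G : SimpleGraph V} {a b : V} (hG : G.IsAcyclic) (hab : a ≠ b)
    (hreach : ¬ G.Reachable a b) : (G ⊔ edge a b).IsAcyclic := by
  classical
  have hnadj : ¬ G.Adj a b := fun h => hreach h.reachable
  have hnadj' : ¬ G.Adj b a := fun h => hreach h.symm.reachable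
  have hdel : (G ⊔ edge a b) \ fromEdgeSet {s(a, b)} = G := by
    ext u v
    simp only [sdiff_adj, sup_adj, edge_adj, fromEdgeSet_adj, Set.mem_singleton_iff, Sym2.eq_iff]
    constructor
    · rintro ⟨h1 | h2, h3⟩
      · exact h1
      · exact absurd ⟨h2.1, h2.2⟩ h3
    · intro h
      refine ⟨Or.inl h, ?_⟩
      rintro ⟨⟨rfl, rfl⟩ | ⟨rfl, rfl⟩, hne⟩
      · exact hnadj h
      · exact hnadj' h
  have hbridge : (G ⊔ edge a b).IsBridge s(a, b) := by
    rw [isBridge_iff, deleteEdges, hdel]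
    exact hreach
  intro v c hc
  by_cases he : s(a, b) ∈ c.edges
  · exact hbridge.notMem_edges_of_isCycle hc he
  · refine hG (c.transfer G ?_) (hc.transfer _)
    intro e hee
    have h1 := c.edges_subset_edgeSet hee
    rw [edgeSet_sup, Set.mem_union] at h1
    rcases h1 with h1 | h1
    · exact h1
    · rw [edge_edgeSet_of_ne hab, Set.mem_singleton_iff] at h1
      exact absurd (h1 ▸ hee) he

lemma castSuccEmb_coe (m : ℕ) : ⇑(Fin.castSuccEmb : Fin m ↪ Fin (m + 1)) = Fin.castSucc := rfl

lemma ladder_adj {m : ℕ} {u v : Fin m} :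
    (ladder m).Adj u v ↔ u ≠ v ∧ ((v : ℕ) = (u : ℕ) + 1 ∨ (v : ℕ) = (u : ℕ) + 2 ∨
      (u : ℕ) = (v : ℕ) + 1 ∨ (u : ℕ) = (v : ℕ) + 2) := by
  rw [ladder, fromRel_adj]
  tauto

lemma comap_ladder (m : ℕ) :
    (ladder (m + 1)).comap (Fin.castSucc : Fin m → Fin (m + 1)) = ladder m := by
  ext u v
  simp only [comap_adj, ladder_adj, Fin.coe_castSucc, ne_eq, Fin.castSucc_inj]


/-- If `G ⊔ e = H ⊔ e` and neither `G` nor `H` contains the edge `e`, then `G = H`. -/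
lemma sup_edge_cancel {G H : SimpleGraph V} {a b : V} (hG : ¬ G.Adj a b) (hH : ¬ H.Adj a b)
    (h : G ⊔ edge a b = H ⊔ edge a b) : G = H := by
  ext u v
  have h2 : G.Adj u v ∨ (edge a b).Adj u v ↔ H.Adj u v ∨ (edge a b).Adj u v := by
    rw [← sup_adj, ← sup_adj, h]
  by_cases he : (edge a b).Adj u v
  · rw [edge_adj] at he
    rcases he.1 with ⟨rfl, rfl⟩ | ⟨rfl, rfl⟩
    · exact iff_of_false hG hH
    · exact iff_of_false (fun hh => hG hh.symm) (fun hh => hH hh.symm)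
  · constructor
    · intro hg
      rcases h2.mp (Or.inl hg) with hh | hh
      · exact hh
      · exact absurd hh he
    · intro hh
      rcases h2.mpr (Or.inl hh) with hg | hg
      · exact hg
      · exact absurd hg he

/-! ### The ladder-specific setup -/

/-- The set of spanning trees of `ladder m`. -/
def S (m : ℕ) : Set (SimpleGraph (Fin m)) := {T | T ≤ ladder m ∧ T.IsTree}

lemma num_eq (m : ℕ) : numSpanningTrees (ladder m) = (S m).ncard := rfl

variable {n : ℕ}

/-- The next-to-last vertex of `Fin (n+2)`. -/
def va (n : ℕ) : Fin (n + 2) := ⟨n + 1, by omega⟩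
/-- The second-to-last vertex of `Fin (n+2)`. -/
def vb (n : ℕ) : Fin (n + 2) := ⟨n, by omega⟩

lemma va_ne_vb : va n ≠ vb n := by simp [va, vb, Fin.ext_iff]

def down (T' : SimpleGraph (Fin (n + 3))) : SimpleGraph (Fin (n + 2)) :=
  SimpleGraph.comap (Fin.castSucc : Fin (n + 2) → Fin (n + 3)) T'

def up (c : Fin (n + 2)) (T : SimpleGraph (Fin (n + 2))) : SimpleGraph (Fin (n + 3)) :=
  T.map Fin.castSuccEmb ⊔ edge (Fin.castSucc c) (Fin.last (n + 2))

def retr (c : Fin (n + 2)) (x : Fin (n + 3)) : Fin (n + 2) :=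
  if hx : x = Fin.last (n + 2) then c else x.castPred hx

@[simp] lemma retr_last (c : Fin (n + 2)) : retr c (Fin.last (n + 2)) = c := dif_pos rfl

@[simp] lemma retr_castSucc (c x : Fin (n + 2)) : retr c (Fin.castSucc x) = x := by
  rw [retr, dif_neg (Fin.castSucc_lt_last x).ne]
  exact Fin.castPred_castSucc _

lemma retr_ne (c : Fin (n + 2)) {x : Fin (n + 3)} (h : x ≠ Fin.last (n + 2)) :
    retr c x = x.castPred h := dif_neg h

def downHom (T' : SimpleGraph (Fin (n + 3))) : down T' →g T' :=
  ⟨(Fin.castSucc : Fin (n + 2) → Fin (n + 3)), fun h => h⟩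

lemma downHom_inj (T' : SimpleGraph (Fin (n + 3))) : Function.Injective ⇑(downHom T') :=
  Fin.castSucc_injective _

def upHom (c : Fin (n + 2)) (T : SimpleGraph (Fin (n + 2))) : T →g up c T :=
  ⟨⇑(Fin.castSuccEmb : Fin (n + 2) ↪ Fin (n + 3)),
    fun {a b} h => (sup_adj _ _ _ _).mpr (Or.inl (by rw [map_adj]; exact ⟨a, b, h, rfl, rfl⟩))⟩

/-- In a subgraph of the ladder, the only possible neighbors of the last vertex are
the two previous vertices. -/
lemma neighbor_last {T' : SimpleGraph (Fin (n + 3))} (hle : T' ≤ ladder (n + 3))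
    {x : Fin (n + 3)} (h : T'.Adj (Fin.last (n + 2)) x) :
    x = Fin.castSucc (va n) ∨ x = Fin.castSucc (vb n) := by
  have h2 := ladder_adj.mp (hle h)
  have hx := x.isLt
  have hval : (x : ℕ) = n + 1 ∨ (x : ℕ) = n := by
    rcases h2 with ⟨hne, h3⟩
    simp only [Fin.val_last] at h3
    omega
  rcases hval with hval | hval
  · left; apply Fin.ext; rw [hval]; rfl
  · right; apply Fin.ext; rw [hval]; rfl

lemma eq_of_down_eq {T1 T2 : SimpleGraph (Fin (n + 3))}
    (hlast : ∀ v, T1.Adj (Fin.last (n + 2)) v ↔ T2.Adj (Fin.last (n + 2)) v)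
    (hdown : down T1 = down T2) : T1 = T2 := by
  ext u v
  by_cases hu : u = Fin.last (n + 2)
  · subst hu; exact hlast v
  by_cases hv : v = Fin.last (n + 2)
  · subst hv; rw [SimpleGraph.adj_comm, hlast, SimpleGraph.adj_comm]
  · have h2 : (down T1).Adj (u.castPred hu) (v.castPred hv) ↔
        (down T2).Adj (u.castPred hu) (v.castPred hv) := by rw [hdown]
    simpa [down, comap_adj, Fin.castSucc_castPred] using h2

lemma down_le {T' : SimpleGraph (Fin (n + 3))} (hle : T' ≤ ladder (n + 3)) :
    down T' ≤ ladder (n + 2) := by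
  rw [← comap_ladder (n + 2)]
  intro u v h
  exact hle h

lemma down_acyclic {T' : SimpleGraph (Fin (n + 3))} (h : T'.IsAcyclic) :
    (down T').IsAcyclic := by
  intro v q hq
  exact h (q.map (downHom T'))
    ((Walk.map_isCycle_iff_of_injective (downHom_inj T')).mpr hq)

lemma down_connected_gen {T' : SimpleGraph (Fin (n + 3))} {K : SimpleGraph (Fin (n + 2))}
    (hdK : down T' ≤ K) (hconn : T'.Connected) (c : Fin (n + 2))
    (hlast : ∀ x, T'.Adj (Fin.last (n + 2)) x → retr c x = c ∨ K.Adj c (retr c x)) :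
    K.Connected := by
  have hr : ∀ ⦃u v : Fin (n + 3)⦄, T'.Adj u v →
      K.Adj (retr c u) (retr c v) ∨ retr c u = retr c v := by
    intro u v h
    by_cases hu : u = Fin.last (n + 2)
    · subst hu
      rw [retr_last]
      rcases hlast v h with h2 | h2
      · exact Or.inr h2.symm
      · exact Or.inl h2
    by_cases hv : v = Fin.last (n + 2)
    · subst hv
      rw [retr_last]
      rcases hlast u h.symm with h2 | h2
      · exact Or.inr h2
      · exact Or.inl h2.symm
    · refine Or.inl (hdK ?_)
      rw [retr_ne c hu, retr_ne c hv]
      show T'.Adj _ _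
      rwa [Fin.castSucc_castPred, Fin.castSucc_castPred]
  rw [connected_iff]
  refine ⟨fun u v => ?_, inferInstance⟩
  have h2 := reachable_of_pseudoHom (retr c) hr
    (hconn.preconnected (Fin.castSucc u) (Fin.castSucc v))
  rwa [retr_castSucc, retr_castSucc] at h2

lemma down_mem_A {T' : SimpleGraph (Fin (n + 3))} (hmem : T' ∈ S (n + 3))
    (hA : T'.Adj (Fin.castSucc (va n)) (Fin.last (n + 2)))
    (hB : ¬ T'.Adj (Fin.castSucc (vb n)) (Fin.last (n + 2))) : down T' ∈ S (n + 2) := by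
  refine ⟨down_le hmem.1, ?_, down_acyclic hmem.2.IsAcyclic⟩
  refine down_connected_gen le_rfl hmem.2.isConnected (va n) ?_
  intro x hx
  rcases neighbor_last hmem.1 hx with rfl | rfl
  · left; rw [retr_castSucc]
  · exact absurd hx.symm hB

lemma down_mem_B {T' : SimpleGraph (Fin (n + 3))} (hmem : T' ∈ S (n + 3))
    (hB : T'.Adj (Fin.castSucc (vb n)) (Fin.last (n + 2)))
    (hA : ¬ T'.Adj (Fin.castSucc (va n)) (Fin.last (n + 2))) : down T' ∈ S (n + 2) := by
  refine ⟨down_le hmem.1, ?_, down_acyclic hmem.2.IsAcyclic⟩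
  refine down_connected_gen le_rfl hmem.2.isConnected (vb n) ?_
  intro x hx
  rcases neighbor_last hmem.1 hx with rfl | rfl
  · exact absurd hx.symm hA
  · left; rw [retr_castSucc]

lemma path2_isPath {T' : SimpleGraph (Fin (n + 3))}
    (hA : T'.Adj (Fin.castSucc (va n)) (Fin.last (n + 2)))
    (hB : T'.Adj (Fin.castSucc (vb n)) (Fin.last (n + 2))) :
    (Walk.cons hA (Walk.cons hB.symm Walk.nil)).IsPath := by
  rw [Walk.cons_isPath_iff, Walk.cons_isPath_iff]
  refine ⟨⟨Walk.IsPath.nil, by simp [va, vb, Fin.ext_iff, Fin.val_last]⟩, ?_⟩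
  simp only [Walk.support_cons, Walk.support_nil, List.mem_cons, List.mem_singleton]
  push_neg
  refine ⟨?_, ?_, by simp⟩
  · exact (Fin.castSucc_lt_last _).ne
  · simp [va, vb, Fin.ext_iff]

lemma not_adj_AB {T' : SimpleGraph (Fin (n + 3))} (htree : T'.IsTree)
    (hA : T'.Adj (Fin.castSucc (va n)) (Fin.last (n + 2)))
    (hB : T'.Adj (Fin.castSucc (vb n)) (Fin.last (n + 2))) :
    ¬ T'.Adj (Fin.castSucc (va n)) (Fin.castSucc (vb n)) := by
  intro h
  have hp1 : (Walk.cons h Walk.nil).IsPath := by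
    rw [Walk.cons_isPath_iff]
    exact ⟨Walk.IsPath.nil, by simp [h.ne]⟩
  have hp2 := path2_isPath hA hB
  have hequ := (htree.existsUnique_path (Fin.castSucc (va n)) (Fin.castSucc (vb n))).unique hp1 hp2
  have hl := congrArg Walk.length hequ
  simp at hl

lemma not_reach_down {T' : SimpleGraph (Fin (n + 3))} (htree : T'.IsTree)
    (hA : T'.Adj (Fin.castSucc (va n)) (Fin.last (n + 2)))
    (hB : T'.Adj (Fin.castSucc (vb n)) (Fin.last (n + 2))) :
    ¬ (down T').Reachable (va n) (vb n) := by
  intro hr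
  classical
  obtain ⟨w⟩ := hr
  have hq : ((w.toPath : (down T').Walk (va n) (vb n)).map (downHom T')).IsPath :=
    Walk.map_isPath_of_injective (downHom_inj T') (w.toPath).isPath
  have hq2 := path2_isPath hA hB
  have hequ : ((w.toPath : (down T').Walk (va n) (vb n)).map (downHom T')
        : T'.Walk (Fin.castSucc (va n)) (Fin.castSucc (vb n)))
      = Walk.cons hA (Walk.cons hB.symm Walk.nil) :=
    (htree.existsUnique_path (Fin.castSucc (va n)) (Fin.castSucc (vb n))).unique hq hq2
  have hmem : Fin.last (n + 2) ∈
      ((w.toPath : (down T').Walk (va n) (vb n)).map (downHom T')).support := by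
    rw [hequ]; exact List.mem_cons.mpr (Or.inr (List.mem_cons.mpr (Or.inl rfl)))
  rw [Walk.support_map] at hmem
  obtain ⟨y, hy, hy2⟩ := List.mem_map.mp hmem
  have hy3 : Fin.castSucc y = Fin.last (n + 2) := hy2
  exact absurd hy3 ((Fin.castSucc_lt_last y).ne)

lemma ladder_adj_ab : (ladder (n + 2)).Adj (va n) (vb n) := by
  rw [ladder_adj]
  refine ⟨va_ne_vb, ?_⟩
  have e1 : ((va n : Fin (n + 2)) : ℕ) = n + 1 := rfl
  have e2 : ((vb n : Fin (n + 2)) : ℕ) = n := rfl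
  rw [e1, e2]
  omega

lemma down_mem_C {T' : SimpleGraph (Fin (n + 3))} (hmem : T' ∈ S (n + 3))
    (hA : T'.Adj (Fin.castSucc (va n)) (Fin.last (n + 2)))
    (hB : T'.Adj (Fin.castSucc (vb n)) (Fin.last (n + 2))) :
    down T' ⊔ edge (va n) (vb n) ∈ S (n + 2) := by
  refine ⟨sup_le (down_le hmem.1) ?_, ?_, ?_⟩
  · intro u v huv
    rw [edge_adj] at huv
    rcases huv.1 with ⟨rfl, rfl⟩ | ⟨rfl, rfl⟩
    · exact ladder_adj_ab
    · exact ladder_adj_ab.symm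
  · refine down_connected_gen le_sup_left hmem.2.isConnected (va n) ?_
    intro x hx
    rcases neighbor_last hmem.1 hx with rfl | rfl
    · left; rw [retr_castSucc]
    · right
      rw [retr_castSucc]
      exact (sup_adj _ _ _ _).mpr (Or.inr ((edge_adj _ _ _ _).mpr ⟨Or.inl ⟨rfl, rfl⟩, va_ne_vb⟩))
  · exact isAcyclic_sup_edge (down_acyclic hmem.2.IsAcyclic) va_ne_vb
      (not_reach_down hmem.2 hA hB)

lemma not_adj_down_ab {T' : SimpleGraph (Fin (n + 3))} (htree : T'.IsTree)
    (hA : T'.Adj (Fin.castSucc (va n)) (Fin.last (n + 2)))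
    (hB : T'.Adj (Fin.castSucc (vb n)) (Fin.last (n + 2))) :
    ¬ (down T').Adj (va n) (vb n) :=
  not_adj_AB htree hA hB

lemma adj_last_iff_A {T' : SimpleGraph (Fin (n + 3))} (hle : T' ≤ ladder (n + 3))
    (hA : T'.Adj (Fin.castSucc (va n)) (Fin.last (n + 2)))
    (hB : ¬ T'.Adj (Fin.castSucc (vb n)) (Fin.last (n + 2))) (v : Fin (n + 3)) :
    T'.Adj (Fin.last (n + 2)) v ↔ v = Fin.castSucc (va n) := by
  constructor
  · intro h
    rcases neighbor_last hle h with h2 | h2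
    · exact h2
    · exact absurd (h2 ▸ h).symm hB
  · rintro rfl; exact hA.symm

lemma adj_last_iff_B {T' : SimpleGraph (Fin (n + 3))} (hle : T' ≤ ladder (n + 3))
    (hB : T'.Adj (Fin.castSucc (vb n)) (Fin.last (n + 2)))
    (hA : ¬ T'.Adj (Fin.castSucc (va n)) (Fin.last (n + 2))) (v : Fin (n + 3)) :
    T'.Adj (Fin.last (n + 2)) v ↔ v = Fin.castSucc (vb n) := by
  constructor
  · intro h
    rcases neighbor_last hle h with h2 | h2
    · exact absurd (h2 ▸ h).symm hA
    · exact h2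
  · rintro rfl; exact hB.symm

lemma adj_last_iff_C {T' : SimpleGraph (Fin (n + 3))} (hle : T' ≤ ladder (n + 3))
    (hA : T'.Adj (Fin.castSucc (va n)) (Fin.last (n + 2)))
    (hB : T'.Adj (Fin.castSucc (vb n)) (Fin.last (n + 2))) (v : Fin (n + 3)) :
    T'.Adj (Fin.last (n + 2)) v ↔ v = Fin.castSucc (va n) ∨ v = Fin.castSucc (vb n) := by
  constructor
  · exact fun h => neighbor_last hle h
  · rintro (rfl | rfl)
    · exact hA.symm
    · exact hB.symm

/-! ### The up map -/

lemma up_adj_last' {c : Fin (n + 2)} {T : SimpleGraph (Fin (n + 2))} {x : Fin (n + 3)} :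
    (up c T).Adj (Fin.last (n + 2)) x ↔ x = Fin.castSucc c := by
  rw [up, sup_adj, edge_adj]
  constructor
  · rintro (h | h)
    · exfalso
      rw [map_adj] at h
      obtain ⟨a', b', _, ha, _⟩ := h
      exact (Fin.castSucc_lt_last a').ne ha
    · rcases h.1 with ⟨h1, h2⟩ | ⟨h1, h2⟩
      · exact absurd h1 (Fin.castSucc_lt_last c).ne'
      · exact h2
  · rintro rfl
    exact Or.inr ⟨Or.inr ⟨rfl, rfl⟩, (Fin.castSucc_lt_last c).ne'⟩

lemma up_adj_cs_last {c d : Fin (n + 2)} {T : SimpleGraph (Fin (n + 2))} :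
    (up c T).Adj (Fin.castSucc d) (Fin.last (n + 2)) ↔ d = c := by
  rw [SimpleGraph.adj_comm, up_adj_last', Fin.castSucc_inj]

lemma up_down (c : Fin (n + 2)) (T : SimpleGraph (Fin (n + 2))) : down (up c T) = T := by
  ext u v
  show (up c T).Adj (Fin.castSucc u) (Fin.castSucc v) ↔ T.Adj u v
  rw [up, sup_adj, map_adj, edge_adj]
  constructor
  · rintro (⟨a', b', h, ha, hb⟩ | ⟨h1, h2⟩)
    · obtain rfl : a' = u := Fin.castSucc_injective _ ha
      obtain rfl : b' = v := Fin.castSucc_injective _ hb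
      exact h
    · exfalso
      rcases h1 with ⟨_, h3⟩ | ⟨h3, _⟩
      · exact (Fin.castSucc_lt_last v).ne h3
      · exact (Fin.castSucc_lt_last u).ne h3
  · intro h
    exact Or.inl ⟨u, v, h, rfl, rfl⟩

lemma up_mem {c : Fin (n + 2)}
    (hc : (ladder (n + 3)).Adj (Fin.castSucc c) (Fin.last (n + 2)))
    {T : SimpleGraph (Fin (n + 2))} (hT : T ∈ S (n + 2)) : up c T ∈ S (n + 3) := by
  obtain ⟨hle, htree⟩ := hT
  have hmaple : T.map Fin.castSuccEmb ≤ ladder (n + 3) := by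
    rw [map_le_iff_le_comap]
    have hco : ((ladder (n + 3)).comap ⇑(Fin.castSuccEmb : Fin (n + 2) ↪ Fin (n + 3)))
        = ladder (n + 2) := by
      rw [castSuccEmb_coe]
      exact comap_ladder (n + 2)
    rw [hco]
    exact hle
  have hedgele : edge (Fin.castSucc c) (Fin.last (n + 2)) ≤ ladder (n + 3) := by
    intro u v huv
    rw [edge_adj] at huv
    rcases huv.1 with ⟨rfl, rfl⟩ | ⟨rfl, rfl⟩
    · exact hc
    · exact hc.symm
  have hle' : up c T ≤ ladder (n + 3) := sup_le hmaple hedgele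
  refine ⟨hle', ?_, ?_⟩
  · have hlastadj : (up c T).Adj (Fin.castSucc c) (Fin.last (n + 2)) :=
      (sup_adj _ _ _ _).mpr
        (Or.inr ((edge_adj _ _ _ _).mpr ⟨Or.inl ⟨rfl, rfl⟩, (Fin.castSucc_lt_last c).ne⟩))
    have key : ∀ u : Fin (n + 3), (up c T).Reachable u (Fin.last (n + 2)) := by
      intro u
      induction u using Fin.lastCases with
      | last => exact Reachable.refl _
      | cast w =>
        have h1 : T.Reachable w c := htree.isConnected.preconnected w c
        have h2 : (up c T).Reachable (upHom c T c) (Fin.last (n + 2)) := hlastadj.reachable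
        exact (h1.map (upHom c T)).trans h2
    rw [connected_iff]
    exact ⟨fun u v => (key u).trans (key v).symm, inferInstance⟩
  · intro v cyc hcyc
    by_cases hl : Fin.last (n + 2) ∈ cyc.support
    · exact not_isCycle_through_pendant (fun x hx => up_adj_last'.mp hx) cyc hcyc hl
    · have hrefl : ∀ ⦃a b : Fin (n + 2)⦄,
          (up c T).Adj (Fin.castSuccEmb a) (Fin.castSuccEmb b) → T.Adj a b := by
        intro a b h
        have h2 : (down (up c T)).Adj a b := h
        rwa [up_down] at h2
      have hsup : ∀ w ∈ cyc.support,
          w ∈ Set.range ⇑(Fin.castSuccEmb : Fin (n + 2) ↪ Fin (n + 3)) := by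
        intro w hw
        have hwne : w ≠ Fin.last (n + 2) := fun h => hl (h ▸ hw)
        exact ⟨w.castPred hwne, Fin.castSucc_castPred w hwne⟩
      obtain ⟨u₀, hu₀⟩ := hsup v (Walk.start_mem_support cyc)
      obtain ⟨q, hq⟩ := isCycle_pullback Fin.castSuccEmb hrefl cyc hcyc hsup hu₀
      exact htree.IsAcyclic q hq

/-! ### The counting arguments -/

lemma step_upper (n : ℕ) : (S (n + 3)).ncard ≤ 3 * (S (n + 2)).ncard := by
  classical
  set sA : Set (SimpleGraph (Fin (n + 3))) :=
    {T' | T' ∈ S (n + 3) ∧ T'.Adj (Fin.castSucc (va n)) (Fin.last (n + 2)) ∧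
      ¬ T'.Adj (Fin.castSucc (vb n)) (Fin.last (n + 2))} with hsA
  set sB : Set (SimpleGraph (Fin (n + 3))) :=
    {T' | T' ∈ S (n + 3) ∧ T'.Adj (Fin.castSucc (vb n)) (Fin.last (n + 2)) ∧
      ¬ T'.Adj (Fin.castSucc (va n)) (Fin.last (n + 2))} with hsB
  set sC : Set (SimpleGraph (Fin (n + 3))) :=
    {T' | T' ∈ S (n + 3) ∧ T'.Adj (Fin.castSucc (va n)) (Fin.last (n + 2)) ∧
      T'.Adj (Fin.castSucc (vb n)) (Fin.last (n + 2))} with hsC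
  have hsub : S (n + 3) ⊆ sA ∪ sB ∪ sC := by
    intro T' hT'
    have hLL0 : Fin.last (n + 2) ≠ (0 : Fin (n + 3)) := by
      intro h
      have := congrArg Fin.val h
      simp [Fin.val_last] at this
    obtain ⟨p⟩ := hT'.2.isConnected.preconnected (Fin.last (n + 2)) 0
    obtain ⟨x, hadj, _, _⟩ := Walk.exists_eq_cons_of_ne hLL0 p
    have hx := neighbor_last hT'.1 hadj
    by_cases h1 : T'.Adj (Fin.castSucc (va n)) (Fin.last (n + 2)) <;>
      by_cases h2 : T'.Adj (Fin.castSucc (vb n)) (Fin.last (n + 2))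
    · exact Or.inr ⟨hT', h1, h2⟩
    · exact Or.inl (Or.inl ⟨hT', h1, h2⟩)
    · exact Or.inl (Or.inr ⟨hT', h2, h1⟩)
    · exfalso
      rcases hx with rfl | rfl
      · exact h1 hadj.symm
      · exact h2 hadj.symm
  have hfin2 : (S (n + 2)).Finite := Set.toFinite _
  have cardA : sA.ncard ≤ (S (n + 2)).ncard := by
    have himg : down '' sA ⊆ S (n + 2) := by
      rintro _ ⟨T', hT', rfl⟩
      exact down_mem_A hT'.1 hT'.2.1 hT'.2.2
    have hinj : Set.InjOn down sA := by
      rintro T1 hT1 T2 hT2 hd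
      exact eq_of_down_eq (fun v => by
        rw [adj_last_iff_A hT1.1.1 hT1.2.1 hT1.2.2 v,
          adj_last_iff_A hT2.1.1 hT2.2.1 hT2.2.2 v]) hd
    calc sA.ncard = (down '' sA).ncard := (Set.ncard_image_of_injOn hinj).symm
      _ ≤ (S (n + 2)).ncard := Set.ncard_le_ncard himg hfin2
  have cardB : sB.ncard ≤ (S (n + 2)).ncard := by
    have himg : down '' sB ⊆ S (n + 2) := by
      rintro _ ⟨T', hT', rfl⟩
      exact down_mem_B hT'.1 hT'.2.1 hT'.2.2
    have hinj : Set.InjOn down sB := by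
      rintro T1 hT1 T2 hT2 hd
      exact eq_of_down_eq (fun v => by
        rw [adj_last_iff_B hT1.1.1 hT1.2.1 hT1.2.2 v,
          adj_last_iff_B hT2.1.1 hT2.2.1 hT2.2.2 v]) hd
    calc sB.ncard = (down '' sB).ncard := (Set.ncard_image_of_injOn hinj).symm
      _ ≤ (S (n + 2)).ncard := Set.ncard_le_ncard himg hfin2
  have cardC : sC.ncard ≤ (S (n + 2)).ncard := by
    have himg : (fun T' => down T' ⊔ edge (va n) (vb n)) '' sC ⊆ S (n + 2) := by
      rintro _ ⟨T', hT', rfl⟩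
      exact down_mem_C hT'.1 hT'.2.1 hT'.2.2
    have hinj : Set.InjOn (fun T' => down T' ⊔ edge (va n) (vb n)) sC := by
      rintro T1 hT1 T2 hT2 hd
      have hd2 : down T1 = down T2 :=
        sup_edge_cancel (not_adj_down_ab hT1.1.2 hT1.2.1 hT1.2.2)
          (not_adj_down_ab hT2.1.2 hT2.2.1 hT2.2.2) hd
      exact eq_of_down_eq (fun v => by
        rw [adj_last_iff_C hT1.1.1 hT1.2.1 hT1.2.2 v,
          adj_last_iff_C hT2.1.1 hT2.2.1 hT2.2.2 v]) hd2
    calc sC.ncard = ((fun T' => down T' ⊔ edge (va n) (vb n)) '' sC).ncard :=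
        (Set.ncard_image_of_injOn hinj).symm
      _ ≤ (S (n + 2)).ncard := Set.ncard_le_ncard himg hfin2
  calc (S (n + 3)).ncard ≤ (sA ∪ sB ∪ sC).ncard :=
        Set.ncard_le_ncard hsub (Set.toFinite _)
    _ ≤ (sA ∪ sB).ncard + sC.ncard := Set.ncard_union_le _ _
    _ ≤ (sA.ncard + sB.ncard) + sC.ncard := by
        exact Nat.add_le_add_right (Set.ncard_union_le _ _) _
    _ ≤ 3 * (S (n + 2)).ncard := by omega

lemma step_lower (n : ℕ) : 2 * (S (n + 2)).ncard ≤ (S (n + 3)).ncard := by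
  classical
  have e1 : ((Fin.castSucc (va n) : Fin (n + 3)) : ℕ) = n + 1 := rfl
  have e2 : ((Fin.castSucc (vb n) : Fin (n + 3)) : ℕ) = n := rfl
  have e3 : ((Fin.last (n + 2) : Fin (n + 3)) : ℕ) = n + 2 := rfl
  have hcA : (ladder (n + 3)).Adj (Fin.castSucc (va n)) (Fin.last (n + 2)) := by
    rw [ladder_adj]
    exact ⟨Fin.ne_of_val_ne (by rw [e1, e3]; omega), by rw [e1, e3]; omega⟩
  have hcB : (ladder (n + 3)).Adj (Fin.castSucc (vb n)) (Fin.last (n + 2)) := by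
    rw [ladder_adj]
    exact ⟨Fin.ne_of_val_ne (by rw [e2, e3]; omega), by rw [e2, e3]; omega⟩
  have hsub : (up (va n) '' S (n + 2)) ∪ (up (vb n) '' S (n + 2)) ⊆ S (n + 3) := by
    rintro _ (⟨T, hT, rfl⟩ | ⟨T, hT, rfl⟩)
    · exact up_mem hcA hT
    · exact up_mem hcB hT
  have hdisj : Disjoint (up (va n) '' S (n + 2)) (up (vb n) '' S (n + 2)) := by
    rw [Set.disjoint_left]
    rintro _ ⟨T1, _, rfl⟩ ⟨T2, _, h⟩
    have h1 : (up (va n) T1).Adj (Fin.castSucc (va n)) (Fin.last (n + 2)) :=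
      up_adj_cs_last.mpr rfl
    have h2 : (up (vb n) T2).Adj (Fin.castSucc (va n)) (Fin.last (n + 2)) := by
      rw [h]; exact h1
    exact va_ne_vb (up_adj_cs_last.mp h2)
  have hinj : ∀ c : Fin (n + 2), Set.InjOn (up c) (S (n + 2)) := by
    intro c T1 _ T2 _ h
    have h2 := congrArg down h
    rwa [up_down, up_down] at h2
  calc 2 * (S (n + 2)).ncard
      = (up (va n) '' S (n + 2)).ncard + (up (vb n) '' S (n + 2)).ncard := by
        rw [Set.ncard_image_of_injOn (hinj _), Set.ncard_image_of_injOn (hinj _)]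
        ring
    _ = ((up (va n) '' S (n + 2)) ∪ (up (vb n) '' S (n + 2))).ncard :=
        (Set.ncard_union_eq hdisj (Set.toFinite _) (Set.toFinite _)).symm
    _ ≤ (S (n + 3)).ncard := Set.ncard_le_ncard hsub (Set.toFinite _)


end LadderAux

/-- If `L1` and `L2` are ladders with `n1` and `n2` vertices respectively,
`n1 > n2 > 1`, then `3^(n1-n2)·τ(L2) ≥ τ(L1) ≥ 2^(n1-n2)·τ(L2)`. -/
theorem ladder_spanning_trees_bounds (n1 n2 : ℕ) (h21 : 1 < n2) (h12 : n2 < n1) :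
    3 ^ (n1 - n2) * numSpanningTrees (ladder n2) ≥ numSpanningTrees (ladder n1) ∧
    numSpanningTrees (ladder n1) ≥ 2 ^ (n1 - n2) * numSpanningTrees (ladder n2) := by
  have key : ∀ k m : ℕ, 2 ≤ m →
      numSpanningTrees (ladder (m + k)) ≤ 3 ^ k * numSpanningTrees (ladder m) ∧
      2 ^ k * numSpanningTrees (ladder m) ≤ numSpanningTrees (ladder (m + k)) := by
    intro k
    induction k with
    | zero => intro m hm; simp
    | succ k ih =>
      intro m hm
      obtain ⟨ih1, ih2⟩ := ih m hm
      have e1 : m + (k + 1) = (m + k - 2) + 3 := by omega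
      have e2 : m + k = (m + k - 2) + 2 := by omega
      have hup := LadderAux.step_upper (m + k - 2)
      have hlo := LadderAux.step_lower (m + k - 2)
      rw [← LadderAux.num_eq, ← LadderAux.num_eq] at hup hlo
      rw [← e2] at hup hlo
      rw [e1]
      constructor
      · calc numSpanningTrees (ladder ((m + k - 2) + 3))
            ≤ 3 * numSpanningTrees (ladder (m + k)) := hup
          _ ≤ 3 * (3 ^ k * numSpanningTrees (ladder m)) := Nat.mul_le_mul_left _ ih1
          _ = 3 ^ (k + 1) * numSpanningTrees (ladder m) := by ring
      · calc 2 ^ (k + 1) * numSpanningTrees (ladder m)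
            = 2 * (2 ^ k * numSpanningTrees (ladder m)) := by ring
          _ ≤ 2 * numSpanningTrees (ladder (m + k)) := Nat.mul_le_mul_left _ ih2
          _ ≤ numSpanningTrees (ladder ((m + k - 2) + 3)) := hlo
  obtain ⟨h1, h2⟩ := key (n1 - n2) n2 (by omega)
  have e : n2 + (n1 - n2) = n1 := by omega
  rw [e] at h1 h2
  exact ⟨h1, h2⟩
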